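/- Let $G$ be a complete $p$-valued group of finite rank with ordered basis $g_1, \ldots, g_d$, $k$ a field of characteristic $p$, and for $\alpha \in \mathbb{N}^d$ let $\partial^{(\alpha)}$ be the unique continuous $k$-linear endomorphism of $kG$ with $\partial^{(\alpha)}(g_1^{\lambda_1}\cdots g_d^{\lambda_d}) = \binom{\lambda_1}{\alpha_1}\cdots\binom{\lambda_d}{\alpha_d} g_1^{\lambda_1}\cdots g_d^{\lambda_d}$ for all $\lambda \in \mathbb{Z}_p^d$. Then, writing $b_i = g_i - 1$ and $\mathbf{b}^\beta = b_1^{\beta_1}\cdots b_d^{\beta_d}$, one has $\partial^{(\alpha)}(\mathbf{b}^\beta) = \binom{\beta}{\alpha} \prod_{i=1}^d (1+b_i)^{\alpha_i} b_i^{\beta_i - \alpha_i}$ for all $\alpha, \beta \in \mathbb{N}^d$ (interpreted as $0$ when $\alpha_i > \beta_i$ for some $i$). -/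

import Mathlib

open Finset

/-- Decomposing a sum over `Fintype.piFinset` on `Fin (n+1)` into the sum over the value at `0`
and the sum over the tail. -/
lemma sum_piFinset_succ_aux {n : ℕ} {M : Type*} [AddCommMonoid M]
    (s : Fin (n+1) → Finset ℕ) (F : (Fin (n+1) → ℕ) → M) :
    ∑ γ ∈ Fintype.piFinset s, F γ
      = ∑ c ∈ s 0, ∑ γ ∈ Fintype.piFinset (Fin.tail s), F (Fin.cons c γ) := by
  classical
  have h : Fintype.piFinset s
      = (s 0 ×ˢ Fintype.piFinset (Fin.tail s)).map (Fin.consEquiv _).toEmbedding := by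
    simpa using Finset.filter_piFinset_eq_map_consEquiv s (fun _ => True)
  rw [h, Finset.sum_map, Finset.sum_product]
  rfl

/-- Expanding an ordered (list) product of finite sums as a sum over `Fintype.piFinset`
of ordered products; this is the noncommutative distributivity law we need. -/
lemma listProd_sum {A : Type*} [Ring A] :
    ∀ (d : ℕ) (s : Fin d → Finset ℕ) (f : (i : Fin d) → ℕ → A),
      (List.ofFn fun i => ∑ c ∈ s i, f i c).prod
        = ∑ γ ∈ Fintype.piFinset s, (List.ofFn fun i => f i (γ i)).prod
  | 0, s, f => by simp
  | (n+1), s, f => by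
    rw [List.ofFn_succ, List.prod_cons,
      listProd_sum n (fun i => s i.succ) (fun i c => f i.succ c),
      Finset.sum_mul_sum, sum_piFinset_succ_aux]
    refine Finset.sum_congr rfl fun c _ => Finset.sum_congr rfl fun γ _ => ?_
    rw [List.ofFn_succ, List.prod_cons]
    simp [Fin.cons_zero, Fin.cons_succ, Fin.tail]

/-- Pulling scalars out of an ordered (list) product. -/
lemma listProd_smul {k A : Type*} [CommSemiring k] [Ring A] [Algebra k A] :
    ∀ (d : ℕ) (a : Fin d → k) (x : Fin d → A),
      (List.ofFn fun i => a i • x i).prod = (∏ i, a i) • (List.ofFn x).prod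
  | 0, a, x => by simp
  | (n+1), a, x => by
    rw [List.ofFn_succ, List.prod_cons, listProd_smul n _ _,
      List.ofFn_succ (f := x), List.prod_cons, Fin.prod_univ_succ,
      smul_mul_assoc, mul_smul_comm, ← mul_smul]

/-- Binomial expansion of `(u - 1)^n` with coefficients in the scalar ring. -/
lemma sub_one_pow_expand {k A : Type*} [CommRing k] [Ring A] [Algebra k A] (u : A) (n : ℕ) :
    (u - 1)^n = ∑ m ∈ range (n+1), (((-1:k)^(n-m)) * (n.choose m : k)) • u^m := by
  have h := ((Commute.one_right u).neg_right).add_pow n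
  rw [sub_eq_add_neg, h]
  refine Finset.sum_congr rfl fun m _ => ?_
  rw [Algebra.smul_def, map_mul, map_pow, map_neg, map_one, map_natCast,
    ((Commute.one_right u).neg_right.pow_pow m (n-m)).eq, mul_assoc, mul_assoc,
    ((Nat.cast_commute (n.choose m) (u^m))).eq]

/-- The single-variable quantized divided power identity. -/
lemma single_var_identity {k A : Type*} [CommRing k] [Ring A] [Algebra k A] (u : A) (a b : ℕ) :
    ∑ c ∈ Finset.range (b+1),
        ((-1:k)^(b-c) * (b.choose c : k) * (c.choose a : k)) • u^c
      = ((b.choose a : k)) • (u^a * (u-1)^(b-a)) := by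
  by_cases hab : a ≤ b
  · rw [sub_one_pow_expand (k := k), Finset.mul_sum, Finset.smul_sum]
    have hsplit : range (b+1) = Finset.Ico 0 (b+1) := by rw [Finset.range_eq_Ico]
    rw [hsplit, ← Finset.sum_Ico_consecutive _ (Nat.zero_le a) (by omega : a ≤ b + 1)]
    have h1 : ∑ c ∈ Finset.Ico 0 a,
        ((-1:k)^(b-c) * (b.choose c : k) * (c.choose a : k)) • u^c = 0 := by
      refine Finset.sum_eq_zero fun c hc => ?_
      rw [Finset.mem_Ico] at hc
      rw [Nat.choose_eq_zero_of_lt hc.2]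
      simp
    rw [h1, zero_add, Finset.sum_Ico_eq_sum_range]
    have hrange : b + 1 - a = b - a + 1 := by omega
    rw [hrange]
    refine Finset.sum_congr rfl fun m hm => ?_
    rw [Finset.mem_range] at hm
    rw [mul_smul_comm, ← pow_add, smul_smul]
    congr 1
    have hch : b.choose (a+m) * (a+m).choose a = b.choose a * (b-a).choose m := by
      have := Nat.choose_mul (n := b) (k := a + m) (s := a) (by omega)
      simpa using this
    have hsub : b - (a + m) = b - a - m := by omega
    rw [hsub]
    have hcast : ((b.choose (a+m) : k)) * ((a+m).choose a : k)
        = ((b.choose a : k)) * ((b-a).choose m : k) := by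
      have := congrArg (fun t : ℕ => (t : k)) hch
      push_cast at this
      exact this
    calc (-1:k)^(b-a-m) * (b.choose (a+m) : k) * ((a+m).choose a : k)
        = (-1:k)^(b-a-m) * ((b.choose (a+m) : k) * ((a+m).choose a : k)) := by ring
      _ = (-1:k)^(b-a-m) * ((b.choose a : k) * ((b-a).choose m : k)) := by rw [hcast]
      _ = (b.choose a : k) * ((-1:k)^(b-a-m) * ((b-a).choose m : k)) := by ring
  · push_neg at hab
    rw [Nat.choose_eq_zero_of_lt hab]
    simp only [Nat.cast_zero, zero_smul]
    refine Finset.sum_eq_zero fun c hc => ?_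
    rw [Finset.mem_range] at hc
    rw [Nat.choose_eq_zero_of_lt (by omega : c < a)]
    simp

theorem quantized_divided_power_on_b_monomials
    (p : ℕ) (hp : p.Prime) (k : Type*) [Field k] (hchar : CharP k p)
    (A : Type*) [Ring A] [Algebra k A]
    (d : ℕ) (g : Fin d → Aˣ)
    (α : Fin d → ℕ)
    (D : A →ₗ[k] A)
    -- the defining property of `∂^{(α)}` on (ordered) group monomials
    (hD : ∀ γ : Fin d → ℕ,
      D ((List.ofFn fun i => ((g i : A) ^ γ i)).prod)
        = (∏ i : Fin d, ((γ i).choose (α i) : k)) •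
            (List.ofFn fun i => ((g i : A) ^ γ i)).prod) :
    ∀ β : Fin d → ℕ,
      D ((List.ofFn fun i => ((g i : A) - 1) ^ β i).prod)
        = (∏ i : Fin d, ((β i).choose (α i) : k)) •
            (List.ofFn fun i => ((g i : A) ^ α i) * ((g i : A) - 1) ^ (β i - α i)).prod := by
  intro β
  classical
  have hfn : (fun i : Fin d => ((g i : A) - 1) ^ β i)
      = fun i => ∑ c ∈ Finset.range (β i + 1),
          (((-1:k)^(β i - c)) * ((β i).choose c : k)) • ((g i : A))^c := by
    funext i
    exact sub_one_pow_expand _ _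
  calc
    D ((List.ofFn fun i => ((g i : A) - 1) ^ β i).prod)
        = ∑ γ ∈ Fintype.piFinset (fun i => Finset.range (β i + 1)),
            D ((List.ofFn fun i =>
              (((-1:k)^(β i - γ i)) * ((β i).choose (γ i) : k)) • ((g i : A))^(γ i)).prod) := by
          rw [hfn, listProd_sum, map_sum]
    _ = ∑ γ ∈ Fintype.piFinset (fun i => Finset.range (β i + 1)),
          (List.ofFn fun i =>
            ((-1:k)^(β i - γ i) * ((β i).choose (γ i) : k) * ((γ i).choose (α i) : k)) •
              ((g i : A))^(γ i)).prod := by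
        refine Finset.sum_congr rfl fun γ _ => ?_
        rw [listProd_smul, LinearMap.map_smul, hD, smul_smul, ← Finset.prod_mul_distrib,
          ← listProd_smul]
    _ = (List.ofFn fun i => ∑ c ∈ Finset.range (β i + 1),
          ((-1:k)^(β i - c) * ((β i).choose c : k) * ((c).choose (α i) : k)) •
            ((g i : A))^c).prod := by
        rw [listProd_sum]
    _ = (List.ofFn fun i => (((β i).choose (α i) : k)) •
          (((g i : A))^(α i) * (((g i : A)) - 1)^(β i - α i))).prod := by
        have h2 : (fun i : Fin d => ∑ c ∈ Finset.range (β i + 1),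
            ((-1:k)^(β i - c) * ((β i).choose c : k) * ((c).choose (α i) : k)) •
              ((g i : A))^c)
            = fun i => (((β i).choose (α i) : k)) •
                (((g i : A))^(α i) * (((g i : A)) - 1)^(β i - α i)) :=
          funext fun i => single_var_identity _ _ _
        rw [h2]
    _ = (∏ i : Fin d, ((β i).choose (α i) : k)) •
          (List.ofFn fun i => ((g i : A) ^ α i) * ((g i : A) - 1) ^ (β i - α i)).prod :=
        listProd_smul d _ _
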